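/- For each w in a finite Coxeter group W, the element e_w := π_{w^{-1} w_0} π̄_{w_0 w} of the biHecke monoid is idempotent, and its image set is exactly the lower interval [1, w]_L in left weak order. -/

import Mathlib

open scoped Classical

noncomputable section

variable {B W : Type*} [Group W] {M : CoxeterMatrix B}

/-- The elementary bubble antisorting operator `π_i` on a Coxeter group:
`w·π_i = w` if `i` is a right descent of `w`, and `w·π_i = w s_i` otherwise. -/
noncomputable def piOp (cs : CoxeterSystem M W) (i : B) : W → W :=
  fun w => if cs.IsRightDescent w i then w else w * cs.simple i

/-- The elementary bubble sorting operator `π̄_i` on a Coxeter group: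
`w·π̄_i = w s_i` if `i` is a right descent of `w`, and `w·π̄_i = w` otherwise. -/
noncomputable def pibOp (cs : CoxeterSystem M W) (i : B) : W → W :=
  fun w => if cs.IsRightDescent w i then w * cs.simple i else w

/-- The biHecke monoid: the submonoid of `Function.End W` generated by the antisorting
operators `π_i` and the sorting operators `π̄_i`. -/
noncomputable def biHecke (cs : CoxeterSystem M W) : Submonoid (Function.End W) :=
  Submonoid.closure ({f | ∃ i, f = piOp cs i} ∪ {f | ∃ i, f = pibOp cs i})

/-- Left weak order: `u ≤_L v` iff `ℓ(v u⁻¹) + ℓ(u) = ℓ(v)`. -/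
noncomputable def leL (cs : CoxeterSystem M W) (u v : W) : Prop :=
  cs.length (v * u⁻¹) + cs.length u = cs.length v

/-- Right weak order: `u ≤_R v` iff `ℓ(u) + ℓ(u⁻¹ v) = ℓ(v)`. -/
noncomputable def leR (cs : CoxeterSystem M W) (u v : W) : Prop :=
  cs.length u + cs.length (u⁻¹ * v) = cs.length v

/-- Bruhat order: `u ≤_B v` iff some reduced word of `v` has a subword with product `u`. -/
noncomputable def leB (cs : CoxeterSystem M W) (u v : W) : Prop :=
  ∃ l : List B, cs.IsReduced l ∧ cs.wordProd l = v ∧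
    ∃ l' : List B, l'.Sublist l ∧ cs.wordProd l' = u

/-- Right action of a word of operators: apply the operators from left to right. -/
noncomputable def actWord (ops : B → W → W) (l : List B) (w : W) : W :=
  l.foldl (fun x i => ops i x) w

/-- The function `e_w = π_{w⁻¹ w₀} π̄_{w₀ w}` (given reduced words `l1` for `w⁻¹ w₀` and
`l2` for `w₀ w`), acting on the right. -/
noncomputable def eIdem (cs : CoxeterSystem M W) (l1 l2 : List B) : W → W :=
  fun x => actWord (pibOp cs) l2 (actWord (piOp cs) l1 x)

/-- The parabolic subgroup `W_K`. -/
noncomputable def parab (cs : CoxeterSystem M W) (K : Set B) : Subgroup W :=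
  Subgroup.closure (cs.simple '' K)

/-- `K` is a right block of `w` if `w W_K = W_J w` for some `J`. -/
noncomputable def isRightBlock (cs : CoxeterSystem M W) (w : W) (K : Set B) : Prop :=
  ∃ J : Set B, (fun x => w * x) '' (parab cs K : Set W) = (fun x => x * w) '' (parab cs J : Set W)

/-- `J` is a left block of `w` if `w W_K = W_J w` for some `K`. -/
noncomputable def isLeftBlock (cs : CoxeterSystem M W) (w : W) (J : Set B) : Prop :=
  ∃ K : Set B, (fun x => w * x) '' (parab cs K : Set W) = (fun x => x * w) '' (parab cs J : Set W)

/-- The cutting relation: `v ⊑ w` iff `v = w^K` for some right block `K` of `w`, i.e.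
`w = v · u` with `u ∈ W_K` and `v` has no right descents in `K`. -/
noncomputable def cuts (cs : CoxeterSystem M W) (v w : W) : Prop :=
  ∃ K J : Set B,
    ((fun x => w * x) '' (parab cs K : Set W) = (fun x => x * w) '' (parab cs J : Set W)) ∧
    ∃ u ∈ parab cs K, w = v * u ∧ ∀ k ∈ K, ¬ cs.IsRightDescent v k

/-- Covering relation of left weak order. -/
noncomputable def covL (cs : CoxeterSystem M W) (x y : W) : Prop :=
  leL cs x y ∧ x ≠ y ∧ ∀ z, leL cs x z → leL cs z y → z = x ∨ z = y

end

namespace BiHeckeAux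

open List CoxeterSystem

variable {B W : Type*} [Group W] {M : CoxeterMatrix B}

/-- Auxiliary semidirect-product-like monoid used to define the reflection cocycle. -/
@[ext]
structure DP (W : Type*) where
  f : W → ZMod 2
  g : W

instance : Mul (DP W) :=
  ⟨fun a b => ⟨fun t => a.f t + b.f (a.g⁻¹ * t * a.g), a.g * b.g⟩⟩

instance : One (DP W) := ⟨⟨0, 1⟩⟩

@[simp] lemma DP.mul_f (a b : DP W) (t : W) :
    (a * b).f t = a.f t + b.f (a.g⁻¹ * t * a.g) := rfl
@[simp] lemma DP.mul_g (a b : DP W) : (a * b).g = a.g * b.g := rfl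
@[simp] lemma DP.one_f (t : W) : (1 : DP W).f t = 0 := rfl
@[simp] lemma DP.one_g : (1 : DP W).g = 1 := rfl

instance : Monoid (DP W) where
  mul_assoc a b c := by
    ext t
    · simp only [DP.mul_f, DP.mul_g]
      rw [add_assoc]
      congr 2
      group
    · simp [mul_assoc]
  one_mul a := by
    ext t
    · simp
    · simp
  mul_one a := by
    ext t
    · simp
    · simp

variable (cs : CoxeterSystem M W)

/-- Count (mod 2) of each element in the left inversion sequence of a word. -/
noncomputable def invf (ω : List B) : W → ZMod 2 :=
  fun t => ((cs.leftInvSeq ω).count t : ZMod 2)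

@[simp] lemma invf_nil : invf cs ([] : List B) = 0 := by
  funext t
  simp [invf, CoxeterSystem.leftInvSeq]

lemma invf_cons (i : B) (ω : List B) (t : W) :
    invf cs (i :: ω) t
      = (if t = cs.simple i then 1 else 0) + invf cs ω (cs.simple i * t * cs.simple i) := by
  have hlis : cs.leftInvSeq (i :: ω)
      = cs.simple i :: List.map (MulAut.conj (cs.simple i)) (cs.leftInvSeq ω) := rfl
  have ht : t = (MulAut.conj (cs.simple i)) (cs.simple i * t * cs.simple i) := by
    simp only [MulAut.conj_apply, cs.inv_simple, ← mul_assoc, cs.simple_mul_simple_self,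
      one_mul, cs.simple_mul_simple_cancel_right]
  unfold invf
  rw [hlis, List.count_cons]
  rcases eq_or_ne t (cs.simple i) with h | h
  · rw [if_pos h, if_pos (by exact_mod_cast beq_iff_eq.mpr h.symm)]
    nth_rewrite 1 [ht]
    rw [List.count_map_of_injective _ _ (MulAut.conj (cs.simple i)).injective]
    push_cast
    ring
  · rw [if_neg h, if_neg (by simpa using fun hh => h hh.symm)]
    nth_rewrite 1 [ht]
    rw [List.count_map_of_injective _ _ (MulAut.conj (cs.simple i)).injective]
    push_cast
    ring

/-- The generator images in `DP W`. -/
noncomputable def gfun (i : B) : DP W :=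
  ⟨fun t => if t = cs.simple i then 1 else 0, cs.simple i⟩

lemma prod_map_gfun : ∀ ω : List B,
    (ω.map (gfun cs)).prod = ⟨invf cs ω, cs.wordProd ω⟩
  | [] => by

      simp only [List.map_nil, List.prod_nil, CoxeterSystem.wordProd_nil, invf_nil]
      rfl
  | i :: ω => by
      rw [List.map_cons, List.prod_cons, prod_map_gfun ω]
      ext t
      · simp only [DP.mul_f, gfun, cs.inv_simple, invf_cons]
      · simp [gfun, cs.wordProd_cons]

lemma conj_alt (i j : B) (k : ℕ) :
    cs.simple j * cs.wordProd (alternatingWord j i (2 * k + 1)) * cs.simple j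
      = cs.wordProd (alternatingWord i j (2 * k + 3)) := by
  have h1 : alternatingWord i j (2 * k + 3) = (alternatingWord j i (2 * k + 2)).concat j :=
    alternatingWord_succ i j (2 * k + 2)
  have h2 : alternatingWord j i (2 * k + 2)
      = (if Even (2 * k + 1) then i else j) :: alternatingWord j i (2 * k + 1) :=
    alternatingWord_succ' j i (2 * k + 1)
  rw [if_neg (by simp [Nat.even_add_one, parity_simps])] at h2
  rw [h1, cs.wordProd_concat, h2, cs.wordProd_cons]

lemma lis_alt : ∀ (n : ℕ) (i j : B),
    cs.leftInvSeq (alternatingWord i j n) =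
      (List.range n).map (fun k => cs.wordProd
        (alternatingWord (if Even n then j else i) (if Even n then i else j) (2 * k + 1)))
  | 0, i, j => by simp [CoxeterSystem.leftInvSeq, alternatingWord]
  | n + 1, i, j => by
      rw [alternatingWord_succ' i j n]
      have hlis : ∀ (c : B) (ω : List B), cs.leftInvSeq (c :: ω)
          = cs.simple c :: List.map (MulAut.conj (cs.simple c)) (cs.leftInvSeq ω) :=
        fun _ _ => rfl
      rw [hlis, lis_alt n i j, List.range_succ_eq_map, List.map_cons, List.map_map]
      rcases Nat.even_or_odd n with hn | hn
      · have hn1 : ¬ Even (n + 1) := by simp [Nat.even_add_one, hn]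
        rw [if_pos hn, if_pos hn, if_neg hn1, if_neg hn1]
        congr 1
        · have : alternatingWord i j (2 * 0 + 1) = [j] := by
            norm_num [alternatingWord]
          rw [this]
          simp
        · rw [List.map_map]
          apply List.map_congr_left
          intro k _
          simp only [Function.comp_apply]
          rw [MulAut.conj_apply, cs.inv_simple,
            show 2 * Nat.succ k + 1 = 2 * k + 3 by omega]
          exact conj_alt cs i j k
      · have hn' : ¬ Even n := Nat.not_even_iff_odd.mpr hn
        have hn1 : Even (n + 1) := by simpa [Nat.even_add_one] using hn'
        rw [if_neg hn', if_neg hn', if_pos hn1, if_pos hn1]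
        congr 1
        · have : alternatingWord j i (2 * 0 + 1) = [i] := by
            norm_num [alternatingWord]
          rw [this]
          simp
        · rw [List.map_map]
          apply List.map_congr_left
          intro k _
          simp only [Function.comp_apply]
          rw [MulAut.conj_apply, cs.inv_simple,
            show 2 * Nat.succ k + 1 = 2 * k + 3 by omega]
          exact conj_alt cs j i k

lemma prod_alt_odd (i j : B) (k : ℕ) :
    cs.wordProd (alternatingWord j i (2 * k + 1))
      = cs.simple i * (cs.simple j * cs.simple i) ^ k := by
  have := cs.prod_alternatingWord_eq_mul_pow j i (2 * k + 1)
  rw [if_neg (by simp [Nat.even_add_one, parity_simps])] at this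
  rw [this, show (2 * k + 1) / 2 = k by omega]

lemma invf_alt_zero (i j : B) : invf cs (alternatingWord i j (2 * M i j)) = 0 := by
  funext t
  unfold invf
  rw [lis_alt cs (2 * M i j) i j, if_pos (by simp), if_pos (by simp)]
  rw [show 2 * M i j = M i j + M i j by ring, List.range_add, List.map_append]
  have hmap : (List.map (M i j + ·) (List.range (M i j))).map
        (fun k => cs.wordProd (alternatingWord j i (2 * k + 1)))
      = (List.range (M i j)).map
        (fun k => cs.wordProd (alternatingWord j i (2 * k + 1))) := by
    rw [List.map_map]
    apply List.map_congr_left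
    intro k _
    simp only [Function.comp_apply]
    rw [prod_alt_odd, prod_alt_odd, show M i j + k = M i j + k from rfl, pow_add,
      cs.simple_mul_simple_pow' i j, one_mul]
  rw [hmap, List.count_append]
  push_cast
  show _ + _ = (0 : ZMod 2)
  exact CharTwo.add_self_eq_zero _

lemma pow_prod_gfun (i j : B) (k : ℕ) :
    (gfun cs i * gfun cs j) ^ k = ((alternatingWord i j (2 * k)).map (gfun cs)).prod := by
  induction k with
  | zero => simp [alternatingWord]
  | succ k ih =>
      have h1 : alternatingWord i j (2 * (k + 1)) = (alternatingWord j i (2 * k + 1)).concat j :=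
        alternatingWord_succ i j (2 * k + 1)
      have h2 : alternatingWord j i (2 * k + 1) = (alternatingWord i j (2 * k)).concat i :=
        alternatingWord_succ j i (2 * k)
      rw [pow_succ, ih, h1, h2, List.concat_eq_append, List.concat_eq_append,
        List.map_append, List.map_append, List.prod_append, List.prod_append]
      simp [mul_assoc]

lemma gfun_liftable : M.IsLiftable (gfun cs) := by
  intro i j
  rw [pow_prod_gfun, prod_map_gfun, invf_alt_zero]
  have hπ : cs.wordProd (alternatingWord i j (2 * M i j)) = 1 := by
    have := cs.prod_alternatingWord_eq_mul_pow i j (2 * M i j)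
    rw [if_pos (by simp)] at this
    rw [this, show 2 * M i j / 2 = M i j by omega, cs.simple_mul_simple_pow, one_mul]
  rw [hπ]
  rfl

/-- The reflection cocycle homomorphism. -/
noncomputable def psi : W →* DP W := cs.lift ⟨gfun cs, gfun_liftable cs⟩

lemma psi_simple (i : B) : psi cs (cs.simple i) = gfun cs i :=
  cs.lift_apply_simple (gfun_liftable cs) i

lemma psi_wordProd (ω : List B) : psi cs (cs.wordProd ω) = ⟨invf cs ω, cs.wordProd ω⟩ := by
  rw [← prod_map_gfun, CoxeterSystem.wordProd, map_list_prod, List.map_map]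
  congr 1
  apply List.map_congr_left
  intro i _
  exact psi_simple cs i

/-- The reflection cocycle: `nf cs w t = 1` iff `t` is a left inversion of `w`. -/
noncomputable def nf (w : W) : W → ZMod 2 := (psi cs w).f

lemma psi_g (w : W) : (psi cs w).g = w := by
  obtain ⟨ω, rfl⟩ := cs.wordProd_surjective w
  rw [psi_wordProd]

lemma nf_wordProd (ω : List B) : nf cs (cs.wordProd ω) = invf cs ω := by
  unfold nf
  rw [psi_wordProd]

lemma nf_mul (u v : W) (t : W) : nf cs (u * v) t = nf cs u t + nf cs v (u⁻¹ * t * u) := by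
  unfold nf
  rw [map_mul]
  simp [psi_g]

@[simp] lemma nf_one (t : W) : nf cs 1 t = 0 := by
  unfold nf
  rw [map_one]
  rfl

lemma nf_simple (i : B) (t : W) : nf cs (cs.simple i) t = if t = cs.simple i then 1 else 0 := by
  unfold nf
  rw [psi_simple]
  rfl

lemma nf_inv (u t : W) : nf cs u⁻¹ t = nf cs u (u * t * u⁻¹) := by
  have h := nf_mul cs u u⁻¹ (u * t * u⁻¹)
  rw [mul_inv_cancel, nf_one] at h
  have harg : u⁻¹ * (u * t * u⁻¹) * u = t := by group
  rw [harg] at h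
  have : ∀ a b : ZMod 2, 0 = a + b → b = a := by decide
  exact this _ _ h

lemma mem_lis_iff {ω : List B} (hred : cs.IsReduced ω) (t : W) :
    t ∈ cs.leftInvSeq ω ↔ nf cs (cs.wordProd ω) t = 1 := by
  rw [nf_wordProd]
  unfold invf
  have hnd := hred.nodup_leftInvSeq
  constructor
  · intro hmem
    rw [List.count_eq_one_of_mem hnd hmem]
    rfl
  · intro h1
    by_contra hmem
    rw [List.count_eq_zero_of_not_mem hmem] at h1
    simp at h1

lemma isReflection_of_nf {w t : W} (h : nf cs w t = 1) : cs.IsReflection t := by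
  obtain ⟨ω, hred, rfl⟩ := cs.exists_reduced_word' w
  exact cs.isReflection_of_mem_leftInvSeq ω ((mem_lis_iff cs hred t).mpr h)

lemma refl_nf {t : W} (ht : cs.IsReflection t) : nf cs t t = 1 := by
  obtain ⟨x, i, rfl⟩ := ht
  set t := x * cs.simple i * x⁻¹ with hts
  have h1 : t = x * (cs.simple i * x⁻¹) := by rw [hts]; group
  rw [h1, nf_mul, nf_mul, ← h1]
  have e1 : x⁻¹ * t * x = cs.simple i := by rw [hts]; group
  have e2 : (cs.simple i)⁻¹ * (x⁻¹ * t * x) * cs.simple i = cs.simple i := by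
    rw [e1]; group
  rw [e1, inv_mul_cancel, one_mul, nf_simple, if_pos rfl, nf_inv, ← hts]
  exact (show ∀ a : ZMod 2, a + (1 + a) = 1 by decide) _

lemma nf_eq_one_of_lt {w t : W} (ht : cs.IsReflection t)
    (hlt : cs.length (t * w) < cs.length w) : nf cs w t = 1 := by
  rcases (show ∀ a : ZMod 2, a = 0 ∨ a = 1 by decide) (nf cs w t) with h0 | h1
  · exfalso
    have htw : nf cs (t * w) t = 1 := by
      rw [nf_mul, refl_nf cs ht, inv_mul_cancel, one_mul, h0]
      rfl
    obtain ⟨ω, hred, hω⟩ := cs.exists_reduced_word' (t * w)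
    rw [hω] at htw
    have hmem := (mem_lis_iff cs hred t).mpr htw
    have hinv := cs.isLeftInversion_of_mem_leftInvSeq hred hmem
    rw [← hω] at hinv
    have hlt2 := hinv.2
    rw [← mul_assoc, ht.mul_self, one_mul] at hlt2
    omega
  · exact h1

lemma nf_eq_one_iff {w t : W} : nf cs w t = 1 ↔ cs.IsLeftInversion w t := by
  constructor
  · intro h
    obtain ⟨ω, hred, rfl⟩ := cs.exists_reduced_word' w
    exact cs.isLeftInversion_of_mem_leftInvSeq hred ((mem_lis_iff cs hred t).mpr h)
  · intro ⟨ht, hlt⟩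
    exact nf_eq_one_of_lt cs ht hlt

lemma length_eq_ncard (w : W) : cs.length w = Set.ncard {t : W | nf cs w t = 1} := by
  obtain ⟨ω, hred, rfl⟩ := cs.exists_reduced_word' w
  have hset : {t : W | nf cs (cs.wordProd ω) t = 1} = ↑(cs.leftInvSeq ω).toFinset := by
    ext t
    simp only [Set.mem_setOf_eq, Finset.coe_sort_coe, List.coe_toFinset, Set.mem_setOf_eq,
      List.mem_toFinset]
    exact (mem_lis_iff cs hred t).symm
  rw [hset, Set.ncard_coe_finset, List.toFinset_card_of_nodup hred.nodup_leftInvSeq,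
    CoxeterSystem.length_leftInvSeq, hred]

section Longest

variable [Finite W]

lemma nf_w0_eq_one {w0 : W} (hw0 : ∀ u : W, cs.length u ≤ cs.length w0)
    {t : W} (ht : cs.IsReflection t) : nf cs w0 t = 1 := by
  apply nf_eq_one_of_lt cs ht
  have hne := ht.length_mul_right_ne w0
  have := hw0 (t * w0)
  omega

lemma length_w0_mul {w0 : W} (hw0 : ∀ u : W, cs.length u ≤ cs.length w0) (y : W) :
    cs.length (w0 * y) + cs.length y = cs.length w0 := by
  classical
  set T : Set W := {t : W | cs.IsReflection t} with hT
  set Sy : Set W := {t : W | nf cs y t = 1} with hSy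
  have hSyT : Sy ⊆ T := fun t htm => isReflection_of_nf cs htm
  have hset : {t : W | nf cs (w0 * y) t = 1}
      = T \ ((fun r => w0 * r * w0⁻¹) '' Sy) := by
    ext t
    simp only [Set.mem_setOf_eq, Set.mem_diff, Set.mem_image, hT, hSy]
    constructor
    · intro h
      have htT : cs.IsReflection t := isReflection_of_nf cs h
      refine ⟨htT, ?_⟩
      rintro ⟨r, hr, rfl⟩
      rw [nf_mul, nf_w0_eq_one cs hw0 htT] at h
      have harg : w0⁻¹ * (w0 * r * w0⁻¹) * w0 = r := by group
      rw [harg, hr] at h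
      simp at h
    · rintro ⟨htT, hnot⟩
      rw [nf_mul, nf_w0_eq_one cs hw0 htT]
      have h0 : nf cs y (w0⁻¹ * t * w0) = 0 := by
        rcases (show ∀ a : ZMod 2, a = 0 ∨ a = 1 by decide) (nf cs y (w0⁻¹ * t * w0)) with
          h | h
        · exact h
        · exact absurd ⟨w0⁻¹ * t * w0, h, by group⟩ hnot
      rw [h0]
      rfl
  have hTfin : T.Finite := Set.toFinite T
  have hinj : Function.Injective (fun r : W => w0 * r * w0⁻¹) := by
    intro a b hab
    simpa using hab
  have himsub : (fun r => w0 * r * w0⁻¹) '' Sy ⊆ T := by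
    rintro _ ⟨r, hr, rfl⟩
    exact (hSyT hr).conj w0
  have hcard1 : cs.length (w0 * y) = T.ncard - Sy.ncard := by
    rw [length_eq_ncard, hset, Set.ncard_diff himsub (Set.toFinite _),
      Set.ncard_image_of_injective _ hinj]
  have hcard2 : cs.length y = Sy.ncard := length_eq_ncard cs y
  have hcard3 : cs.length w0 = T.ncard := by
    rw [length_eq_ncard]
    congr 1
    ext t
    simp only [Set.mem_setOf_eq]
    exact ⟨fun h => isReflection_of_nf cs h, fun h => nf_w0_eq_one cs hw0 h⟩
  have hle : Sy.ncard ≤ T.ncard := Set.ncard_le_ncard hSyT hTfin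
  omega

lemma length_mul_w0 {w0 : W} (hw0 : ∀ u : W, cs.length u ≤ cs.length w0) (y : W) :
    cs.length (y * w0) + cs.length y = cs.length w0 := by
  have hw0' : ∀ u : W, cs.length u ≤ cs.length w0⁻¹ := by
    intro u
    rw [cs.length_inv]
    exact hw0 u
  have := length_w0_mul cs hw0' y⁻¹
  rw [show w0⁻¹ * y⁻¹ = (y * w0)⁻¹ by group, cs.length_inv, cs.length_inv,
    cs.length_inv] at this
  exact this

lemma w0_mul_self {w0 : W} (hw0 : ∀ u : W, cs.length u ≤ cs.length w0) : w0 * w0 = 1 := by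
  have := length_mul_w0 cs hw0 w0
  have h0 : cs.length (w0 * w0) = 0 := by omega
  exact cs.length_eq_zero_iff.mp h0

end Longest

lemma ris_append : ∀ (γ υ : List B),
    cs.rightInvSeq (γ ++ υ)
      = (cs.rightInvSeq γ).map (fun t => (cs.wordProd υ)⁻¹ * t * cs.wordProd υ)
        ++ cs.rightInvSeq υ
  | [], υ => by simp [CoxeterSystem.rightInvSeq]
  | i :: γ, υ => by
      have h1 : cs.rightInvSeq ((i :: γ) ++ υ)
          = (cs.wordProd (γ ++ υ))⁻¹ * cs.simple i * cs.wordProd (γ ++ υ)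
            :: cs.rightInvSeq (γ ++ υ) := rfl
      have h2 : cs.rightInvSeq (i :: γ)
          = (cs.wordProd γ)⁻¹ * cs.simple i * cs.wordProd γ :: cs.rightInvSeq γ := rfl
      rw [h1, h2, ris_append γ υ, List.map_cons, cs.wordProd_append]
      congr 1
      group

lemma mem_ris_of_isRightInversion {ω : List B} (hred : cs.IsReduced ω) {t : W}
    (hinv : cs.IsRightInversion (cs.wordProd ω) t) : t ∈ cs.rightInvSeq ω := by
  have hl : cs.IsLeftInversion (cs.wordProd ω)⁻¹ t := cs.isLeftInversion_inv_iff.mpr hinv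
  rw [← cs.wordProd_reverse] at hl
  have hred' : cs.IsReduced ω.reverse := (cs.isReduced_reverse_iff ω).mpr hred
  have h1 : nf cs (cs.wordProd ω.reverse) t = 1 := nf_eq_one_of_lt cs hl.1 hl.2
  have hmem := (mem_lis_iff cs hred' t).mpr h1
  rw [cs.leftInvSeq_reverse, List.mem_reverse] at hmem
  exact hmem

/-- The key "lifting" lemma for left weak order. -/
lemma length_step_not_descent {u w : W} {i : B}
    (hu : cs.length (w * cs.simple i * u⁻¹) + cs.length u = cs.length (w * cs.simple i))
    (hl : cs.length (w * cs.simple i) = cs.length w + 1)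
    (hnd : ¬ cs.IsRightDescent u i) :
    cs.length (w * u⁻¹) + cs.length u = cs.length w := by
  classical
  set v := w * cs.simple i with hv
  obtain ⟨γ, hγred, hγ⟩ := cs.exists_reduced_word' (v * u⁻¹)
  obtain ⟨υ, hυred, hυ⟩ := cs.exists_reduced_word' u
  have hπω : cs.wordProd (γ ++ υ) = v := by
    rw [cs.wordProd_append, ← hγ, ← hυ]
    group
  have hredω : cs.IsReduced (γ ++ υ) := by
    show cs.length (cs.wordProd (γ ++ υ)) = (γ ++ υ).length
    rw [hπω, List.length_append, ← hγred, ← hυred, ← hγ, ← hυ]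
    exact hu.symm
  have hrd : cs.IsRightInversion v (cs.simple i) := by
    refine ⟨cs.isReflection_simple i, ?_⟩
    have hvw : v * cs.simple i = w := by rw [hv, cs.simple_mul_simple_cancel_right]
    rw [hvw]
    omega
  rw [← hπω] at hrd
  have hmem := mem_ris_of_isRightInversion cs hredω hrd
  rw [ris_append] at hmem
  rcases List.mem_append.mp hmem with hmem | hmem
  · obtain ⟨r, hr, hre⟩ := List.mem_map.mp hmem
    obtain ⟨j, hj, hrj⟩ := List.mem_iff_getElem.mp hr
    rw [cs.length_rightInvSeq] at hj
    have hgetD : (cs.rightInvSeq γ).getD j 1 = r := by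
      rw [List.getD_eq_getElem _ _ (by rwa [cs.length_rightInvSeq]), hrj]
    have hdel : cs.wordProd γ * r = cs.wordProd (γ.eraseIdx j) := by
      rw [← hgetD]
      exact cs.wordProd_mul_getD_rightInvSeq γ j
    have hre' : (cs.wordProd υ)⁻¹ * r * cs.wordProd υ = cs.simple i := hre
    have hw : w * u⁻¹ = cs.wordProd (γ.eraseIdx j) := by
      have h3 : v = cs.wordProd γ * u := by rw [← hπω, cs.wordProd_append, ← hυ]
      have h4 : v * cs.simple i = w := by rw [hv, cs.simple_mul_simple_cancel_right]
      calc w * u⁻¹ = v * cs.simple i * u⁻¹ := by rw [h4]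
        _ = (cs.wordProd γ * u) * ((cs.wordProd υ)⁻¹ * r * cs.wordProd υ) * u⁻¹ := by
              rw [← h3, hre']
        _ = cs.wordProd γ * r := by rw [← hυ]; group
        _ = cs.wordProd (γ.eraseIdx j) := hdel
    have hlen : cs.length (w * u⁻¹) ≤ γ.length - 1 := by
      rw [hw]
      calc cs.length (cs.wordProd (γ.eraseIdx j)) ≤ (γ.eraseIdx j).length :=
            cs.length_wordProd_le _
        _ = γ.length - 1 := by rw [List.length_eraseIdx]; simp [hj]
    have hγlen : γ.length = cs.length (v * u⁻¹) := by rw [← hγred, ← hγ]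
    have htri : cs.length w ≤ cs.length (w * u⁻¹) + cs.length u := by
      have := cs.length_mul_le (w * u⁻¹) u
      simpa using this
    have hj1 : 1 ≤ γ.length := by omega
    omega
  · exfalso
    apply hnd
    have := cs.isRightInversion_of_mem_rightInvSeq hυred hmem
    rw [← hυ] at this
    exact (cs.isRightInversion_simple_iff_isRightDescent u i).mp this

end BiHeckeAux


section FinalLayer

open BiHeckeAux

variable {B W : Type*} [Group W] {M : CoxeterMatrix B} (cs : CoxeterSystem M W)

lemma actWord_append (ops : B → W → W) (l l' : List B) (x : W) :
    actWord ops (l ++ l') x = actWord ops l' (actWord ops l x) :=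
  List.foldl_append

lemma actWord_cons (ops : B → W → W) (i : B) (l : List B) (x : W) :
    actWord ops (i :: l) x = actWord ops l (ops i x) := rfl

@[simp] lemma actWord_nil (ops : B → W → W) (x : W) : actWord ops [] x = x := rfl

lemma actWord_singleton (ops : B → W → W) (i : B) (x : W) :
    actWord ops [i] x = ops i x := rfl

/-- If the lengths add, the antisorting operators just multiply. -/
lemma actWord_piOp_of_add : ∀ (l : List B) (x : W),
    cs.length (x * cs.wordProd l) = cs.length x + l.length →
    actWord (piOp cs) l x = x * cs.wordProd l
  | [], x, _ => by simp
  | i :: l, x, h => by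
      rw [cs.wordProd_cons, ← mul_assoc] at h
      simp only [List.length_cons] at h
      have h1 : cs.length (x * cs.simple i) = cs.length x + 1 := by
        have hub := cs.length_mul_le x (cs.simple i)
        rw [cs.length_simple] at hub
        have hlb := cs.length_mul_le (x * cs.simple i) (cs.wordProd l)
        have hwl := cs.length_wordProd_le l
        omega
      have hnd : ¬ cs.IsRightDescent x i := by
        unfold CoxeterSystem.IsRightDescent
        omega
      rw [actWord_cons]
      have hpi : piOp cs i x = x * cs.simple i := if_neg hnd
      rw [hpi, actWord_piOp_of_add l (x * cs.simple i) (by omega),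
        cs.wordProd_cons, ← mul_assoc]

/-- If the lengths subtract, the sorting operators just multiply. -/
lemma actWord_pibOp_of_sub : ∀ (l : List B) (x : W),
    cs.length (x * cs.wordProd l) + l.length = cs.length x →
    actWord (pibOp cs) l x = x * cs.wordProd l
  | [], x, _ => by simp
  | i :: l, x, h => by
      rw [cs.wordProd_cons, ← mul_assoc] at h
      simp only [List.length_cons] at h
      have h1 : cs.length (x * cs.simple i) + 1 = cs.length x := by
        have hub : cs.length x ≤ cs.length (x * cs.simple i) + 1 := by
          have := cs.length_mul_le (x * cs.simple i) (cs.simple i)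
          rw [cs.simple_mul_simple_cancel_right, cs.length_simple] at this
          omega
        have hlb : cs.length (x * cs.simple i)
            ≤ cs.length (x * cs.simple i * cs.wordProd l) + l.length := by
          have := cs.length_mul_le (x * cs.simple i * cs.wordProd l) (cs.wordProd l)⁻¹
          rw [mul_inv_cancel_right, cs.length_inv] at this
          have hwl := cs.length_wordProd_le l
          omega
        omega
      have hd : cs.IsRightDescent x i := by
        unfold CoxeterSystem.IsRightDescent
        omega
      rw [actWord_cons]
      have hpi : pibOp cs i x = x * cs.simple i := if_pos hd
      rw [hpi, actWord_pibOp_of_sub l (x * cs.simple i) (by omega),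
        cs.wordProd_cons, ← mul_assoc]

variable [Finite W]

/-- `e_w` fixes the lower interval `[1,w]_L` pointwise. -/
lemma eIdem_fix {w w0 : W} (hw0 : ∀ u : W, cs.length u ≤ cs.length w0)
    {l1 l2 : List B} (h1 : cs.IsReduced l1) (h1' : cs.wordProd l1 = w⁻¹ * w0)
    (h2 : cs.IsReduced l2) (h2' : cs.wordProd l2 = w0 * w)
    {u : W} (hu : leL cs u w) : eIdem cs l1 l2 u = u := by
  unfold leL at hu
  have hsq := w0_mul_self cs hw0
  have hwle := hw0 w
  have hA : cs.length (u * w⁻¹ * w0) + cs.length (u * w⁻¹) = cs.length w0 :=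
    length_mul_w0 cs hw0 (u * w⁻¹)
  have hinv1 : cs.length (u * w⁻¹) = cs.length (w * u⁻¹) := by
    rw [← cs.length_inv]
    congr 1
    group
  have hl1 : l1.length + cs.length w = cs.length w0 := by
    rw [← h1, h1']
    have := length_mul_w0 cs hw0 w⁻¹
    rw [cs.length_inv] at this
    omega
  have hl2 : l2.length + cs.length w = cs.length w0 := by
    rw [← h2, h2']
    have := length_w0_mul cs hw0 w
    omega
  have step1 : actWord (piOp cs) l1 u = u * w⁻¹ * w0 := by
    have harg : u * cs.wordProd l1 = u * w⁻¹ * w0 := by rw [h1', ← mul_assoc]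
    have := actWord_piOp_of_add cs l1 u (by rw [harg]; omega)
    rw [this, harg]
  have hprod : u * w⁻¹ * w0 * cs.wordProd l2 = u := by
    rw [h2', show u * w⁻¹ * w0 * (w0 * w) = u * w⁻¹ * (w0 * w0) * w by group, hsq]
    group
  have step2 : actWord (pibOp cs) l2 (u * w⁻¹ * w0) = u := by
    have := actWord_pibOp_of_sub cs l2 (u * w⁻¹ * w0) (by rw [hprod]; omega)
    rw [this, hprod]
  show actWord (pibOp cs) l2 (actWord (piOp cs) l1 u) = u
  rw [step1, step2]

/-- Everything in the image of `π̄_{w₀w}` lies in `[1,w]_L`. -/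
lemma pibOp_into_interval {w0 : W} (hw0 : ∀ u : W, cs.length u ≤ cs.length w0) :
    ∀ (l : List B) (w : W), cs.IsReduced l → cs.wordProd l = w0 * w →
      ∀ y : W, leL cs (actWord (pibOp cs) l y) w := by
  intro l
  induction l using List.reverseRecOn with
  | nil =>
      intro w _ hπ y
      rw [CoxeterSystem.wordProd_nil] at hπ
      have hw : w0⁻¹ = w := inv_eq_of_mul_eq_one_right hπ.symm
      subst hw
      show leL cs y w0⁻¹
      unfold leL
      have h1 : cs.length (w0⁻¹ * y⁻¹) = cs.length (y * w0) := by
        rw [← cs.length_inv]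
        congr 1
        group
      have h2 := length_mul_w0 cs hw0 y
      have h3 := cs.length_inv w0
      have h4 := hw0 y
      omega
  | append_singleton l i ih =>
      intro w hred hπ y
      have hred' : cs.IsReduced l := by
        show cs.length (cs.wordProd l) = l.length
        have h1 : cs.length (cs.wordProd (l ++ [i])) = l.length + 1 := by
          rw [hred]
          simp
        rw [cs.wordProd_append, cs.wordProd_singleton] at h1
        have hub := cs.length_wordProd_le l
        have hlb := cs.length_mul_le (cs.wordProd l) (cs.simple i)
        have hlb2 := cs.length_mul_le (cs.wordProd l * cs.simple i) (cs.simple i)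
        rw [cs.simple_mul_simple_cancel_right, cs.length_simple] at hlb2
        rw [cs.length_simple] at hlb
        omega
      have hπ' : cs.wordProd l = w0 * (w * cs.simple i) := by
        have : cs.wordProd (l ++ [i]) * cs.simple i = cs.wordProd l := by
          rw [cs.wordProd_append, cs.wordProd_singleton,
            cs.simple_mul_simple_cancel_right]
        rw [← this, hπ, mul_assoc]
      have hlw : cs.length (w * cs.simple i) = cs.length w + 1 := by
        have e1 : cs.length (w0 * (w * cs.simple i)) + cs.length (w * cs.simple i)
            = cs.length w0 := length_w0_mul cs hw0 (w * cs.simple i)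
        have e2 : cs.length (w0 * w) + cs.length w = cs.length w0 :=
          length_w0_mul cs hw0 w
        have e3 : cs.length (w0 * (w * cs.simple i)) = l.length := by
          rw [← hπ', hred']
        have e4 : cs.length (w0 * w) = l.length + 1 := by
          rw [← hπ, hred]
          simp
        omega
      have hu := ih (w * cs.simple i) hred' hπ' y
      rw [actWord_append, actWord_singleton]
      set u := actWord (pibOp cs) l y with hudef
      unfold leL at hu ⊢
      by_cases hd : cs.IsRightDescent u i
      · have hpib : pibOp cs i u = u * cs.simple i := if_pos hd
        rw [hpib]
        have hlen : cs.length (u * cs.simple i) + 1 = cs.length u := by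
          rcases cs.length_mul_simple u i with h | h
          · unfold CoxeterSystem.IsRightDescent at hd
            omega
          · omega
        have harg : w * (u * cs.simple i)⁻¹ = w * cs.simple i * u⁻¹ := by
          rw [mul_inv_rev, cs.inv_simple, ← mul_assoc]
        rw [harg]
        omega
      · have hpib : pibOp cs i u = u := if_neg hd
        rw [hpib]
        exact length_step_not_descent cs hu hlw hd

end FinalLayer

/-- The element `e_w := π_{w⁻¹w₀} π̄_{w₀w}` of the biHecke monoid is idempotent, with
image set the lower interval `[1, w]_L` in left weak order. -/
theorem eIdem_idempotent_image {B W : Type*} [Group W] [Finite W] {M : CoxeterMatrix B}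
    (cs : CoxeterSystem M W) (w w0 : W) (hw0 : ∀ u : W, cs.length u ≤ cs.length w0)
    (l1 l2 : List B) (h1 : cs.IsReduced l1) (h1' : cs.wordProd l1 = w⁻¹ * w0)
    (h2 : cs.IsReduced l2) (h2' : cs.wordProd l2 = w0 * w) :
    (∀ x, eIdem cs l1 l2 (eIdem cs l1 l2 x) = eIdem cs l1 l2 x) ∧
    Set.range (eIdem cs l1 l2) = {u : W | leL cs u w} := by
  have hfix : ∀ u : W, leL cs u w → eIdem cs l1 l2 u = u :=
    fun u hu => eIdem_fix cs hw0 h1 h1' h2 h2' hu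
  have hinto : ∀ x : W, leL cs (eIdem cs l1 l2 x) w := fun x =>
    pibOp_into_interval cs hw0 l2 w h2 h2' (actWord (piOp cs) l1 x)
  constructor
  · intro x
    exact hfix _ (hinto x)
  · ext u
    simp only [Set.mem_range, Set.mem_setOf_eq]
    constructor
    · rintro ⟨x, rfl⟩
      exact hinto x
    · intro hu
      exact ⟨u, hfix u hu⟩
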